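/- In the n-partite tournament B on pairs (x,χ) (x ∈ A, χ : A \ (part of x) → ℤ/2, edge from (x,χ) to (x',χ') iff they are in different parts and either x > x' with χ(x')+χ'(x)=1 or x < x' with χ(x')+χ'(x)=0), for every pair u < v in different parts of A, the map θ_{u,v}((x,χ)) = (x, χ^{u,v}), where χ^{u,v}(y) = 1+χ(y) if {x,y} = {u,v} and χ(y) otherwise, is an automorphism of B. -/

import Mathlib

/-- Vertices of the EPPA-witness `B` for `n`-partite tournaments: pairs `(x, χ)` with
`x ∈ A` and `χ` a valuation function defined on the vertices outside the part of `x`. -/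
abbrev NVert {A P : Type*} (part : A → P) :=
  Σ x : A, ({y : A // part y ≠ part x} → ZMod 2)

/-- The edge relation of `B`: `(x,χ)` and `(x',χ')` in different parts are joined by an
edge oriented from `(x,χ)` to `(x',χ')` iff either `x > x'` and `χ(x') + χ'(x) = 1`, or
`x < x'` and `χ(x') + χ'(x) = 0`. -/
def NEdge {A P : Type*} [LinearOrder A] (part : A → P)
    (p q : NVert part) : Prop :=
  ∃ h : part p.1 ≠ part q.1,
    (q.1 < p.1 ∧ p.2 ⟨q.1, Ne.symm h⟩ + q.2 ⟨p.1, h⟩ = 1) ∨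
    (p.1 < q.1 ∧ p.2 ⟨q.1, Ne.symm h⟩ + q.2 ⟨p.1, h⟩ = 0)

/-- The map `θ_{u,v}`: `(x,χ) ↦ (x, χ^{u,v})` where `χ^{u,v}(y) = 1 + χ(y)` if
`{x,y} = {u,v}` and `χ^{u,v}(y) = χ(y)` otherwise. -/
def thetaUVN {A P : Type*} [LinearOrder A] (part : A → P) (u v : A)
    (p : NVert part) : NVert part :=
  ⟨p.1, fun y =>
    (if (p.1 = u ∧ y.1 = v) ∨ (p.1 = v ∧ y.1 = u) then 1 else 0) + p.2 y⟩

lemma aux_cancel (c : Prop) [Decidable c] (a b : ZMod 2) :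
    ((if c then (1 : ZMod 2) else 0) + a) + ((if c then (1 : ZMod 2) else 0) + b)
      = a + b := by
  rw [add_add_add_comm]
  split_ifs <;> simp [show (1 : ZMod 2) + 1 = 0 from rfl]

theorem stmt16 {A P : Type*} [LinearOrder A] [Fintype A] (part : A → P)
    (u v : A) (huv : u < v) (hpart : part u ≠ part v) :
    Function.Bijective (thetaUVN part u v) ∧
      ∀ p q : NVert part,
        NEdge part (thetaUVN part u v p) (thetaUVN part u v q) ↔ NEdge part p q := by
  constructor
  · apply Function.Involutive.bijective
    intro p
    obtain ⟨x, χ⟩ := p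
    simp only [thetaUVN]
    exact congrArg (Sigma.mk x) (funext fun y => by
      show (if (x = u ∧ y.1 = v) ∨ (x = v ∧ y.1 = u) then (1 : ZMod 2) else 0) + ((if (x = u ∧ y.1 = v) ∨ (x = v ∧ y.1 = u) then 1 else 0) + χ y) = χ y
      rw [← add_assoc]
      split_ifs <;> simp [show (1 : ZMod 2) + 1 = 0 from rfl])
  · intro p q
    have hcond : ((p.1 = u ∧ q.1 = v) ∨ (p.1 = v ∧ q.1 = u)) ↔
        ((q.1 = u ∧ p.1 = v) ∨ (q.1 = v ∧ p.1 = u)) := by tauto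
    unfold NEdge thetaUVN
    simp only
    constructor
    · rintro ⟨h, hcase⟩
      refine ⟨h, ?_⟩
      rw [if_congr hcond rfl rfl, aux_cancel] at hcase
      exact hcase
    · rintro ⟨h, hcase⟩
      refine ⟨h, ?_⟩
      rw [if_congr hcond rfl rfl, aux_cancel]
      exact hcase
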